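/- For an (n,k)-PMD X with no δ₁-exceptional components (all terms in group t), the logarithm of its Fourier transform admits the expansion: X̂(ξ) = e(n ξ_k) · exp(−Σ_{m ∈ ℤ_{≥0}^{k−1}, m ≠ 0} binom(|m|₁, m)·(1/|m|₁)·M_m(X)·∏_{j=1}^{k−1}(1 − e(ξ_j − ξ_k))^{m_j}), valid whenever the inner series converges absolutely (in particular when Σ_j |1 − e(ξ_j − ξ_k)|·p_{i,j} < 1 for all i). -/

import Mathlib

open Finset

/-- `e(x) = exp(−2πi x)`. -/
noncomputable def eFn (x : ℝ) : ℂ := Complex.exp (-(2 * Real.pi * Complex.I) * x)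

lemma eFn_add (x y : ℝ) : eFn (x + y) = eFn x * eFn y := by
  simp only [eFn, ← Complex.exp_add]
  congr 1
  push_cast
  ring

lemma eFn_zero : eFn 0 = 1 := by simp [eFn]

lemma eFn_nat_mul (n : ℕ) (x : ℝ) : eFn (n * x) = eFn x ^ n := by
  simp only [eFn, ← Complex.exp_nat_mul]
  congr 1
  push_cast
  ring

/-- Grouping a summable family over `κ → ℕ` by total degree. -/
lemma hasSum_by_degree {κ : Type*} [Fintype κ] [DecidableEq κ] {E : Type*}
    [AddCommGroup E] [UniformSpace E] [IsUniformAddGroup E] [T3Space E] [CompleteSpace E]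
    (f : (κ → ℕ) → E) (hf : Summable f) (T : ℕ → E)
    (hT : ∀ ℓ, ∑ m ∈ Finset.piAntidiag Finset.univ ℓ, f m = T ℓ) :
    HasSum T (∑' m, f m) := by
  set g : (κ → ℕ) → ℕ := fun m => ∑ j, m j with hg
  have key := ((Equiv.sigmaFiberEquiv g).hasSum_iff).mpr hf.hasSum
  refine key.sigma fun ℓ => ?_
  set S : Set (κ → ℕ) := {m | g m = ℓ} with hS
  have hset : ∀ m, m ∈ S ↔ m ∈ Finset.piAntidiag (Finset.univ : Finset κ) ℓ := by
    intro m
    simp [S, g, Finset.mem_piAntidiag]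
  have h1 : HasSum (Set.indicator S f)
      (∑ m ∈ Finset.piAntidiag (Finset.univ : Finset κ) ℓ, Set.indicator S f m) :=
    hasSum_sum_of_ne_finset_zero fun m hm =>
      Set.indicator_of_notMem (fun hmem => hm ((hset m).1 hmem)) f
  have h2 : (∑ m ∈ Finset.piAntidiag (Finset.univ : Finset κ) ℓ, Set.indicator S f m) = T ℓ := by
    rw [← hT ℓ]
    exact Finset.sum_congr rfl fun m hm => Set.indicator_of_mem ((hset m).2 hm) f
  rw [h2] at h1
  exact (hasSum_subtype_iff_indicator).2 h1

/-- The generic term `multinomial(m) ⬝ |m|⁻¹ ⬝ ∏ v^m`. -/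
noncomputable def mterm {R : Type*} [Field R] {κ : Type*} [Fintype κ] (v : κ → R)
    (m : κ → ℕ) : R :=
  (Nat.multinomial Finset.univ m : R) * ((∑ j, m j : ℕ) : R)⁻¹ * ∏ j, v j ^ m j

lemma abs_mterm {κ : Type*} [Fintype κ] (c : κ → ℂ) (m : κ → ℕ) :
    ‖mterm c m‖ = mterm (fun j => ‖c j‖) m := by
  simp only [mterm, norm_mul, norm_inv, norm_prod, norm_pow, Complex.norm_natCast]

lemma fiber_mterm {R : Type*} [Field R] {κ : Type*} [Fintype κ] [DecidableEq κ]
    (v : κ → R) (ℓ : ℕ) :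
    ∑ m ∈ Finset.piAntidiag Finset.univ ℓ, mterm v m = ((ℓ : R))⁻¹ * (∑ j, v j) ^ ℓ := by
  rw [Finset.sum_pow_eq_sum_piAntidiag, Finset.mul_sum]
  refine Finset.sum_congr rfl fun m hm => ?_
  have h : ∑ j, m j = ℓ := by simpa using (Finset.mem_piAntidiag.1 hm).1
  rw [mterm, h]
  ring

lemma mterm_nonneg {κ : Type*} [Fintype κ] (v : κ → ℝ) (hv : ∀ j, 0 ≤ v j) (m : κ → ℕ) :
    0 ≤ mterm v m := by
  unfold mterm
  exact mul_nonneg (mul_nonneg (Nat.cast_nonneg _) (inv_nonneg.2 (Nat.cast_nonneg _)))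
    (Finset.prod_nonneg fun j _ => pow_nonneg (hv j) _)

lemma core {κ : Type*} [Fintype κ] [DecidableEq κ] (c : κ → ℂ)
    (hs : Summable (fun m : κ → ℕ => ‖mterm c m‖)) :
    ‖∑ j, c j‖ < 1 ∧
    (∑' m : κ → ℕ, mterm c m) = -Complex.log (1 - ∑ j, c j) := by
  have hFs : Summable (fun m : κ → ℕ => mterm (fun j => ‖c j‖) m) := by
    simpa only [abs_mterm] using hs
  set w : ℝ := ∑ j, ‖c j‖ with hwdef
  have hR : HasSum (fun ℓ : ℕ => ((ℓ : ℝ))⁻¹ * w ^ ℓ)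
      (∑' m, mterm (fun j => ‖c j‖) m) :=
    hasSum_by_degree _ hFs _ (fun ℓ => fiber_mterm (fun j => ‖c j‖) ℓ)
  have hw0 : 0 ≤ w := Finset.sum_nonneg fun j _ => norm_nonneg _
  have hw : w < 1 := by
    by_contra hcon
    push_neg at hcon
    have hsum1 : Summable (fun ℓ : ℕ => ((ℓ : ℝ))⁻¹) := by
      refine Summable.of_nonneg_of_le (fun ℓ => by positivity) (fun ℓ => ?_) hR.summable
      have h1 : (1 : ℝ) ≤ w ^ ℓ := one_le_pow₀ hcon
      calc ((ℓ : ℝ))⁻¹ = ((ℓ : ℝ))⁻¹ * 1 := (mul_one _).symm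
        _ ≤ ((ℓ : ℝ))⁻¹ * w ^ ℓ := mul_le_mul_of_nonneg_left h1 (by positivity)
    exact Real.not_summable_natCast_inv hsum1
  have hzw : ‖∑ j, c j‖ ≤ w := by
    simpa [hwdef] using norm_sum_le Finset.univ c
  have hz : ‖∑ j, c j‖ < 1 := lt_of_le_of_lt hzw hw
  refine ⟨hz, ?_⟩
  have hfs : Summable (fun m : κ → ℕ => mterm c m) := by
    refine Summable.of_norm ?_
    simpa using hs
  have hC : HasSum (fun ℓ : ℕ => ((ℓ : ℂ))⁻¹ * (∑ j, c j) ^ ℓ) (∑' m, mterm c m) :=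
    hasSum_by_degree _ hfs _ (fun ℓ => fiber_mterm c ℓ)
  have hlog := Complex.hasSum_taylorSeries_neg_log (z := ∑ j, c j)
    (by exact hz)
  have hlog' : HasSum (fun ℓ : ℕ => ((ℓ : ℂ))⁻¹ * (∑ j, c j) ^ ℓ)
      (-Complex.log (1 - ∑ j, c j)) := by
    simpa [div_eq_mul_inv, mul_comm] using hlog
  exact hC.unique hlog'

/-- The term of index `m ∈ ℤ_{≥0}^{k−1}` in the expansion of the log of the Fourier
transform of an `(n,k)`-PMD with parameters `p` at frequency `ξ`:
`binom(|m|₁, m)·(1/|m|₁)·M_m(X)·Π_{j<k}(1 − e(ξ_j − ξ_k))^{m_j}`, where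
`M_m(X) = Σ_i Π_{j<k} p_{i,j}^{m_j}`.  (The `m = 0` term is `0` since `(1/0 : ℂ) = 0`.) -/
noncomputable def momentTerm (n k : ℕ) (p : Fin n → Fin k → ℝ) (ξ : Fin k → ℝ)
    (last : Fin k) (m : Fin (k - 1) → ℕ) : ℂ :=
  (Nat.multinomial Finset.univ m : ℂ) * ((∑ j, m j : ℕ) : ℂ)⁻¹ *
    (∑ i, ∏ j, ((p i (Fin.castLE (Nat.sub_le k 1) j) : ℝ) : ℂ) ^ m j) *
    ∏ j, (1 - eFn (ξ (Fin.castLE (Nat.sub_le k 1) j) - ξ last)) ^ m j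

theorem aux (n k' : ℕ) (p : Fin n → Fin (k' + 1) → ℝ)
    (hp0 : ∀ i j, 0 ≤ p i j) (hsum : ∀ i, ∑ j, p i j = 1)
    (ξ : Fin (k' + 1) → ℝ)
    (hconv : Summable (fun m : Fin (k' + 1 - 1) → ℕ =>
      ‖momentTerm n (k' + 1) p ξ (Fin.last k') m‖)) :
    ∏ i, ∑ j, eFn (ξ j) * (p i j : ℂ)
      = eFn (n * ξ (Fin.last k')) *
        Complex.exp (-(∑' m : Fin (k' + 1 - 1) → ℕ,
          momentTerm n (k' + 1) p ξ (Fin.last k') m)) := by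
  classical
  set cc : Fin n → Fin (k' + 1 - 1) → ℂ := fun i j =>
    (1 - eFn (ξ (Fin.castLE (Nat.sub_le (k' + 1) 1) j) - ξ (Fin.last k'))) *
      (p i (Fin.castLE (Nat.sub_le (k' + 1) 1) j) : ℂ) with hccdef
  -- (1) momentTerm as a finite sum of `mterm`s
  have hmom : ∀ m : Fin (k' + 1 - 1) → ℕ,
      momentTerm n (k' + 1) p ξ (Fin.last k') m = ∑ i, mterm (cc i) m := by
    intro m
    simp only [momentTerm, mterm, hccdef, mul_pow, Finset.prod_mul_distrib,
      Finset.mul_sum, Finset.sum_mul]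
    exact Finset.sum_congr rfl fun i _ => by ring
  -- (2) modulus of momentTerm is the sum of moduli
  have habs : ∀ m : Fin (k' + 1 - 1) → ℕ,
      ‖momentTerm n (k' + 1) p ξ (Fin.last k') m‖
        = ∑ i, ‖mterm (cc i) m‖ := by
    intro m
    have hcast : (∑ i, ∏ j, ((p i (Fin.castLE (Nat.sub_le (k' + 1) 1) j) : ℝ) : ℂ) ^ m j)
        = ((∑ i, ∏ j, (p i (Fin.castLE (Nat.sub_le (k' + 1) 1) j)) ^ m j : ℝ) : ℂ) := by
      push_cast; rfl
    have hM0 : (0 : ℝ) ≤ ∑ i, ∏ j, (p i (Fin.castLE (Nat.sub_le (k' + 1) 1) j)) ^ m j :=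
      Finset.sum_nonneg fun i _ => Finset.prod_nonneg fun j _ => pow_nonneg (hp0 i _) _
    set A : Fin (k' + 1 - 1) → ℝ := fun j =>
      ‖1 - eFn (ξ (Fin.castLE (Nat.sub_le (k' + 1) 1) j) - ξ (Fin.last k'))‖ with hAdef
    have hA : ∀ i, ‖mterm (cc i) m‖
        = mterm (fun j => A j * p i (Fin.castLE (Nat.sub_le (k' + 1) 1) j)) m := by
      intro i
      rw [abs_mterm]
      have hfun : (fun j => ‖cc i j‖)
          = fun j => A j * p i (Fin.castLE (Nat.sub_le (k' + 1) 1) j) := by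
        funext j
        rw [hccdef, hAdef]
        simp only [norm_mul, Complex.norm_real, Real.norm_eq_abs, abs_of_nonneg (hp0 i _)]
      rw [hfun]
    calc ‖momentTerm n (k' + 1) p ξ (Fin.last k') m‖
        = (Nat.multinomial Finset.univ m : ℝ) * ((∑ j, m j : ℕ) : ℝ)⁻¹ *
            (∑ i, ∏ j, (p i (Fin.castLE (Nat.sub_le (k' + 1) 1) j)) ^ m j) *
            ∏ j, A j ^ m j := by
          rw [momentTerm, hcast]
          simp only [norm_mul, norm_inv, Complex.norm_natCast, Complex.norm_real, Real.norm_eq_abs,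
            abs_of_nonneg hM0, norm_prod, norm_pow, hAdef]
      _ = ∑ i, mterm (fun j => A j * p i (Fin.castLE (Nat.sub_le (k' + 1) 1) j)) m := by
          simp only [mterm, mul_pow, Finset.prod_mul_distrib, Finset.mul_sum, Finset.sum_mul]
          exact Finset.sum_congr rfl fun i _ => by ring
      _ = ∑ i, ‖mterm (cc i) m‖ := Finset.sum_congr rfl fun i _ => (hA i).symm
  -- (3) summability for each component
  have hsi : ∀ i, Summable (fun m : Fin (k' + 1 - 1) → ℕ => ‖mterm (cc i) m‖) := by
    intro i
    refine Summable.of_nonneg_of_le (fun m => norm_nonneg _) (fun m => ?_) hconv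
    rw [habs m]
    exact Finset.single_le_sum (f := fun i' => ‖mterm (cc i') m‖)
      (fun i' _ => norm_nonneg _) (Finset.mem_univ i)
  have hcore : ∀ i, ‖∑ j, cc i j‖ < 1 ∧
      (∑' m : Fin (k' + 1 - 1) → ℕ, mterm (cc i) m) = -Complex.log (1 - ∑ j, cc i j) :=
    fun i => core (cc i) (hsi i)
  -- (4) the tsum
  have htsum : (∑' m : Fin (k' + 1 - 1) → ℕ, momentTerm n (k' + 1) p ξ (Fin.last k') m)
      = ∑ i, -Complex.log (1 - ∑ j, cc i j) := by
    rw [tsum_congr hmom, Summable.tsum_finsetSum (fun i _ => Summable.of_norm (by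
      simpa using hsi i))]
    exact Finset.sum_congr rfl fun i _ => (hcore i).2
  have hne : ∀ i, (1 : ℂ) - ∑ j, cc i j ≠ 0 := by
    intro i h
    have h1 : (∑ j, cc i j) = 1 := by linear_combination -h
    have := (hcore i).1
    rw [h1] at this
    simp at this
  -- (5) rewrite the RHS
  have hRHS : Complex.exp (-(∑' m : Fin (k' + 1 - 1) → ℕ,
      momentTerm n (k' + 1) p ξ (Fin.last k') m)) = ∏ i, (1 - ∑ j, cc i j) := by
    rw [htsum]
    have : -(∑ i, -Complex.log (1 - ∑ j, cc i j)) = ∑ i, Complex.log (1 - ∑ j, cc i j) := by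
      simp
    rw [this, Complex.exp_sum]
    exact Finset.prod_congr rfl fun i _ => Complex.exp_log (hne i)
  -- (6) the LHS, one factor at a time
  have hL : ∀ i, (∑ j, eFn (ξ j) * (p i j : ℂ))
      = eFn (ξ (Fin.last k')) * (1 - ∑ j, cc i j) := by
    intro i
    have h1 : ∀ j : Fin (k' + 1), eFn (ξ j) = eFn (ξ (Fin.last k')) * eFn (ξ j - ξ (Fin.last k')) := by
      intro j
      rw [← eFn_add]
      congr 1
      ring
    have h2 : (∑ j, eFn (ξ j) * (p i j : ℂ))
        = eFn (ξ (Fin.last k')) * ∑ j, eFn (ξ j - ξ (Fin.last k')) * (p i j : ℂ) := by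
      rw [Finset.mul_sum]
      exact Finset.sum_congr rfl fun j _ => by rw [h1 j]; ring
    rw [h2]
    congr 1
    have h3 : (∑ j, eFn (ξ j - ξ (Fin.last k')) * (p i j : ℂ))
        = (∑ j, (p i j : ℂ)) - ∑ j : Fin (k' + 1),
            (1 - eFn (ξ j - ξ (Fin.last k'))) * (p i j : ℂ) := by
      rw [← Finset.sum_sub_distrib]
      exact Finset.sum_congr rfl fun j _ => by ring
    have h4 : (∑ j, (p i j : ℂ)) = 1 := by
      rw [← Complex.ofReal_sum, hsum i, Complex.ofReal_one]
    have h5 : (∑ j : Fin (k' + 1), (1 - eFn (ξ j - ξ (Fin.last k'))) * (p i j : ℂ))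
        = ∑ j, cc i j := by
      rw [Fin.sum_univ_castSucc]
      have hlast : (1 - eFn (ξ (Fin.last k') - ξ (Fin.last k'))) * (p i (Fin.last k') : ℂ) = 0 := by
        rw [sub_self, eFn_zero, sub_self, zero_mul]
      rw [hlast, add_zero]
      rfl
    rw [h3, h4, h5]
  calc ∏ i, ∑ j, eFn (ξ j) * (p i j : ℂ)
      = ∏ i, (eFn (ξ (Fin.last k')) * (1 - ∑ j, cc i j)) := Finset.prod_congr rfl fun i _ => hL i
    _ = eFn (ξ (Fin.last k')) ^ n * ∏ i, (1 - ∑ j, cc i j) := by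
        rw [Finset.prod_mul_distrib, Finset.prod_const, Finset.card_univ, Fintype.card_fin]
    _ = eFn (n * ξ (Fin.last k')) *
        Complex.exp (-(∑' m : Fin (k' + 1 - 1) → ℕ,
          momentTerm n (k' + 1) p ξ (Fin.last k') m)) := by
        rw [eFn_nat_mul, hRHS]

/-- For an `(n,k)`-PMD `X` with `p_{i,j} = Pr[X_i = e_j]`, the Fourier transform
`X̂(ξ) = Π_i Σ_j e(ξ_j) p_{i,j}` admits the expansion
`X̂(ξ) = e(n ξ_k)·exp(−Σ_{m ≠ 0} binom(|m|₁,m)·(1/|m|₁)·M_m(X)·Π_j (1−e(ξ_j−ξ_k))^{m_j})`,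
valid whenever the inner series converges absolutely. -/
theorem stmt13 (n k : ℕ) (hk : 0 < k) (p : Fin n → Fin k → ℝ)
    (hp0 : ∀ i j, 0 ≤ p i j) (hsum : ∀ i, ∑ j, p i j = 1)
    (ξ : Fin k → ℝ)
    (hconv : Summable (fun m : Fin (k - 1) → ℕ =>
      ‖momentTerm n k p ξ ⟨k - 1, by omega⟩ m‖)) :
    ∏ i, ∑ j, eFn (ξ j) * (p i j : ℂ)
      = eFn (n * ξ ⟨k - 1, by omega⟩) *
        Complex.exp (-(∑' m : Fin (k - 1) → ℕ, momentTerm n k p ξ ⟨k - 1, by omega⟩ m)) := by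
  obtain ⟨k', rfl⟩ : ∃ k', k = k' + 1 := ⟨k - 1, by omega⟩
  exact aux n k' p hp0 hsum ξ hconv
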